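/- Let A be a p×p symmetric positive definite real matrix, β ∈ ℝ^p, σ > 0 and n a positive integer. Let V be the (p+1)×(p+1) block matrix V = σ² [[4βᵀAβ + 2nσ², 2βᵀ], [2β, A⁻¹]]. Then V is invertible and V⁻¹ = (1/σ²) [[1/(2nσ²), −(1/(nσ²))βᵀA], [−(1/(nσ²))Aβ, (I + (2/(nσ²)) A β βᵀ) A]]. -/

import Mathlib

open Matrix

noncomputable section

/-- explicit inverse of the block matrix
`V = σ² [[4βᵀAβ + 2nσ², 2βᵀ], [2β, A⁻¹]]`. -/
theorem block_matrix_inverse {p : ℕ} (A : Matrix (Fin p) (Fin p) ℝ) (hA : A.PosDef)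
    (β : Fin p → ℝ) (σ : ℝ) (hσ : 0 < σ) (n : ℕ) (hn : 0 < n)
    (V : Matrix (Fin 1 ⊕ Fin p) (Fin 1 ⊕ Fin p) ℝ)
    (hV : V = σ ^ 2 •
      Matrix.fromBlocks
        (Matrix.of fun _ _ => 4 * (β ⬝ᵥ A.mulVec β) + 2 * n * σ ^ 2)
        (Matrix.of fun _ j => 2 * β j)
        (Matrix.of fun i _ => 2 * β i)
        A⁻¹) :
    IsUnit V ∧
    V⁻¹ = (σ ^ 2)⁻¹ •
      Matrix.fromBlocks
        (Matrix.of fun _ _ => 1 / (2 * n * σ ^ 2))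
        (Matrix.of fun _ j => -(1 / (n * σ ^ 2)) * Matrix.vecMul β A j)
        (Matrix.of fun i _ => -(1 / (n * σ ^ 2)) * A.mulVec β i)
        ((1 + (2 / (n * σ ^ 2)) • Matrix.vecMulVec (A.mulVec β) β) * A) := by
  have hσ2 : (σ : ℝ) ^ 2 ≠ 0 := pow_ne_zero _ hσ.ne'
  have hn' : (n : ℝ) ≠ 0 := Nat.cast_ne_zero.mpr hn.ne'
  have hA1 : A⁻¹ * A = 1 := Matrix.nonsing_inv_mul A (isUnit_iff_ne_zero.mpr hA.det_pos.ne')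
  set d : ℝ := β ⬝ᵥ A.mulVec β with hd
  have key : V * ((σ ^ 2)⁻¹ •
      Matrix.fromBlocks
        (Matrix.of fun _ _ => 1 / (2 * n * σ ^ 2))
        (Matrix.of fun _ j => -(1 / (n * σ ^ 2)) * Matrix.vecMul β A j)
        (Matrix.of fun i _ => -(1 / (n * σ ^ 2)) * A.mulVec β i)
        ((1 + (2 / (n * σ ^ 2)) • Matrix.vecMulVec (A.mulVec β) β) * A)) = 1 := by
    subst hV
    rw [Matrix.smul_mul, Matrix.mul_smul, smul_smul, mul_inv_cancel₀ hσ2, one_smul]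
    have e1 : (Matrix.of fun _ _ => 4 * d + 2 * n * σ ^ 2 : Matrix (Fin 1) (Fin 1) ℝ)
        = (4 * d + 2 * n * σ ^ 2) • 1 := by
      ext i j; simp [Matrix.one_apply, Subsingleton.elim i j]
    have e2 : (Matrix.of fun _ j => 2 * β j : Matrix (Fin 1) (Fin p) ℝ)
        = (2 : ℝ) • Matrix.replicateRow (Fin 1) β := by ext i j; simp [Matrix.replicateRow]
    have e3 : (Matrix.of fun i _ => 2 * β i : Matrix (Fin p) (Fin 1) ℝ)
        = (2 : ℝ) • Matrix.replicateCol (Fin 1) β := by ext i j; simp [Matrix.replicateCol]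
    have e4 : (Matrix.of fun _ _ => 1 / (2 * n * σ ^ 2) : Matrix (Fin 1) (Fin 1) ℝ)
        = (1 / (2 * n * σ ^ 2)) • 1 := by
      ext i j; simp [Matrix.one_apply, Subsingleton.elim i j]
    have e5 : (Matrix.of fun _ j => -(1 / (n * σ ^ 2)) * Matrix.vecMul β A j :
        Matrix (Fin 1) (Fin p) ℝ) = (-(1 / (n * σ ^ 2))) • Matrix.replicateRow (Fin 1) (β ᵥ* A) := by
      ext i j; simp [Matrix.replicateRow]
    have e6 : (Matrix.of fun i _ => -(1 / (n * σ ^ 2)) * A.mulVec β i :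
        Matrix (Fin p) (Fin 1) ℝ) = (-(1 / (n * σ ^ 2))) • Matrix.replicateCol (Fin 1) (A *ᵥ β) := by
      ext i j; simp [Matrix.replicateCol]
    have hdo : (Matrix.of fun _ _ => β ⬝ᵥ A *ᵥ β : Matrix (Fin 1) (Fin 1) ℝ) = d • 1 := by
      ext i j; simp [Matrix.one_apply, Subsingleton.elim i j, hd]
    have hcol : A⁻¹ * Matrix.replicateCol (Fin 1) (A *ᵥ β) = Matrix.replicateCol (Fin 1) β := by
      rw [← Matrix.replicateCol_mulVec, Matrix.mulVec_mulVec, hA1, Matrix.one_mulVec]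
    have hrowA : Matrix.replicateRow (Fin 1) β * A = Matrix.replicateRow (Fin 1) (β ᵥ* A) :=
      (Matrix.replicateRow_vecMul A β).symm
    have hrc : Matrix.replicateRow (Fin 1) β * Matrix.replicateCol (Fin 1) (A *ᵥ β) = d • 1 := by
      rw [Matrix.replicateRow_mul_replicateCol, hdo]
    have hX : (1 + (2 / (n * σ ^ 2)) • Matrix.vecMulVec (A *ᵥ β) β) * A
        = A + (2 / (n * σ ^ 2)) • (Matrix.replicateCol (Fin 1) (A *ᵥ β) * Matrix.replicateRow (Fin 1) (β ᵥ* A)) := by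
      rw [add_mul, one_mul, Matrix.smul_mul, Matrix.vecMulVec_eq (Fin 1), Matrix.mul_assoc,
        ← Matrix.replicateRow_vecMul]
      rfl
    have hAX : A⁻¹ * ((1 + (2 / (n * σ ^ 2)) • Matrix.vecMulVec (A *ᵥ β) β) * A)
        = 1 + (2 / (n * σ ^ 2)) • (Matrix.replicateCol (Fin 1) β * Matrix.replicateRow (Fin 1) (β ᵥ* A)) := by
      rw [hX, Matrix.mul_add, hA1, Matrix.mul_smul, ← Matrix.mul_assoc, hcol]
    have h11 : ((4 * d + 2 * n * σ ^ 2) • (1 : Matrix (Fin 1) (Fin 1) ℝ)) *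
          ((1 / (2 * n * σ ^ 2)) • 1) +
        ((2 : ℝ) • Matrix.replicateRow (Fin 1) β) * ((-(1 / (n * σ ^ 2))) • Matrix.replicateCol (Fin 1) (A *ᵥ β))
        = 1 := by
      simp only [Matrix.smul_mul, Matrix.mul_smul, Matrix.mul_one, hrc, smul_smul]
      match_scalars
      all_goals field_simp
      all_goals ring
    have h12 : ((4 * d + 2 * n * σ ^ 2) • (1 : Matrix (Fin 1) (Fin 1) ℝ)) *
          ((-(1 / (n * σ ^ 2))) • Matrix.replicateRow (Fin 1) (β ᵥ* A)) +
        ((2 : ℝ) • Matrix.replicateRow (Fin 1) β) *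
          ((1 + (2 / (n * σ ^ 2)) • Matrix.vecMulVec (A *ᵥ β) β) * A) = 0 := by
      simp only [hX, Matrix.mul_add, Matrix.mul_smul, Matrix.smul_mul, Matrix.one_mul,
        Matrix.mul_one, ← Matrix.mul_assoc, hrc, hrowA, smul_smul]
      match_scalars
      all_goals field_simp
      all_goals ring
    have h21 : ((2 : ℝ) • Matrix.replicateCol (Fin 1) β) *
          ((1 / (2 * n * σ ^ 2)) • (1 : Matrix (Fin 1) (Fin 1) ℝ)) +
        A⁻¹ * ((-(1 / (n * σ ^ 2))) • Matrix.replicateCol (Fin 1) (A *ᵥ β)) = 0 := by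
      rw [Matrix.mul_smul A⁻¹, hcol, Matrix.smul_mul, Matrix.mul_smul, Matrix.mul_one, smul_smul]
      match_scalars
      all_goals field_simp
      all_goals ring
    have h22 : ((2 : ℝ) • Matrix.replicateCol (Fin 1) β) *
          ((-(1 / (n * σ ^ 2))) • Matrix.replicateRow (Fin 1) (β ᵥ* A)) +
        A⁻¹ * ((1 + (2 / (n * σ ^ 2)) • Matrix.vecMulVec (A *ᵥ β) β) * A) = 1 := by
      rw [hAX, Matrix.smul_mul, Matrix.mul_smul, smul_smul]
      match_scalars
      all_goals (try field_simp)
      all_goals ring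
    rw [e1, e2, e3, e4, e5, e6, Matrix.fromBlocks_multiply, h11, h12, h21, h22,
      Matrix.fromBlocks_one]
  refine ⟨?_, Matrix.inv_eq_right_inv key⟩
  have := invertibleOfRightInverse _ _ key
  exact isUnit_of_invertible V
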